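/- (Locality of quantum channels, equivalence.) Let C and V be finite sets, (V,E) a graph, and (M_k) a finite family of complex matrices indexed by C×V with ∑_k M_k† M_k = I, defining the quantum channel Γ(ρ) = ∑_k M_k ρ M_k†. Then the following are equivalent: (a) for all c,c' ∈ C and v,v' ∈ V with (v,v') ∉ E, one has (M_k)((c',v'),(c,v)) = 0 for every k; (b) for every X ⊆ V and every density operator ρ on C×V, P_X(Γ(ρ)) ≤ P_X(ρ) + P_{B(X)}(ρ). -/

import Mathlib

open Finset Matrix
open scoped ComplexOrder

section Defs

variable {S : Type*} [Fintype S]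

/-- `p` is a probability distribution on the finite set `S`. -/
def IsProbDist (p : S → ℝ) : Prop := (∀ s, 0 ≤ p s) ∧ ∑ s, p s = 1

/-- The mass `p(X) = ∑_{s ∈ X} p s` of a subset `X`. -/
noncomputable def mass (p : S → ℝ) (X : Set S) : ℝ := ∑ s, X.indicator p s

/-- Total variation distance `‖p - q‖_TV = (1/2) ∑_s |p s - q s|`. -/
noncomputable def tvDist (p q : S → ℝ) : ℝ := (1/2) * ∑ s, |p s - q s|

/-- A (column-)stochastic matrix `P s' s`: entries nonnegative, columns sum to one. -/
def IsStochastic (P : S → S → ℝ) : Prop :=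
  (∀ s' s, 0 ≤ P s' s) ∧ ∀ s, ∑ s', P s' s = 1

/-- Action of a matrix on a distribution: `(P p)(s') = ∑_s P s' s * p s`. -/
def matVec (P : S → S → ℝ) (p : S → ℝ) : S → ℝ := fun s' => ∑ s, P s' s * p s

open scoped Classical in
/-- Ergodic flow `Q_P(Xᶜ, X) = ∑_{s ∈ X, s' ∉ X} P s' s * pbar s`. -/
noncomputable def ergFlow (P : S → S → ℝ) (pbar : S → ℝ) (X : Set S) : ℝ :=
  ∑ s, ∑ s', if s ∈ X ∧ s' ∉ X then P s' s * pbar s else 0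

/-- Bottleneck ratio `Φ_X(P) = Q_P(Xᶜ,X) / pbar(X)`. -/
noncomputable def bottleneck (P : S → S → ℝ) (pbar : S → ℝ) (X : Set S) : ℝ :=
  ergFlow P pbar X / mass pbar X

/-- The distribution `pbar` conditioned on the set `X`. -/
noncomputable def condDist (pbar : S → ℝ) (X : Set S) : S → ℝ :=
  X.indicator (fun s => pbar s / mass pbar X)

/-- Conductance `Φ(P) = min { Φ_X(P) : 0 < pbar(X) ≤ 1/2 }`. -/
noncomputable def conductance (P : S → S → ℝ) (pbar : S → ℝ) : ℝ :=
  sInf {r | ∃ X : Set S, 0 < mass pbar X ∧ mass pbar X ≤ 1/2 ∧ r = bottleneck P pbar X}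

end Defs

section Graph

variable {V : Type*} [Fintype V]

/-- Neighborhood `B(X) = {v ∉ X : (v,v') ∈ E for some v' ∈ X}`. -/
def nbhd (E : V → V → Prop) (X : Set V) : Set V :=
  {v | v ∉ X ∧ ∃ v' ∈ X, E v v'}

/-- A matrix on `V` is local w.r.t. the graph: `P v' v = 0` whenever `(v,v') ∉ E`. -/
def IsLocalMatrix (E : V → V → Prop) (P : V → V → ℝ) : Prop :=
  ∀ v' v, ¬ E v v' → P v' v = 0

/-- Graph conductance `Φ_pbar`: supremum of `Φ(P)` over local stochastic `P` fixing `pbar`. -/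
noncomputable def graphConductance (E : V → V → Prop) (pbar : V → ℝ) : ℝ :=
  sSup {r | ∃ P : V → V → ℝ, IsStochastic P ∧ IsLocalMatrix E P ∧
    matVec P pbar = pbar ∧ r = conductance P pbar}

/-- A family of stochastic linear maps is local w.r.t. the graph. -/
def IsLocalFamily (E : V → V → Prop) (Ψ : ℕ → (V → ℝ) →ₗ[ℝ] (V → ℝ)) : Prop :=
  ∀ (X : Set V) (p₀ : V → ℝ), IsProbDist p₀ → ∀ t : ℕ,
    mass (Ψ (t+1) p₀) X ≤ mass (Ψ t p₀) X + mass (Ψ t p₀) (nbhd E X)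

end Graph

section Lift

variable {C V : Type*} [Fintype C] [Fintype V]

/-- A stochastic matrix on the lifted space `C × V` is local in the lifted sense. -/
def IsLocalLift (E : V → V → Prop) (P : C × V → C × V → ℝ) : Prop :=
  ∀ c' v' c v, ¬ E v v' → P (c', v') (c, v) = 0

open scoped Classical in
/-- Initialization `F[p](c,v) = p v` if `c = ca v`, else `0`. -/
noncomputable def liftInit (ca : V → C) (p : V → ℝ) : C × V → ℝ :=
  fun x => if x.1 = ca x.2 then p x.2 else 0

/-- Marginal map `f(p̂)(v) = ∑_c p̂(c,v)`. -/
def margDist (phat : C × V → ℝ) : V → ℝ := fun v => ∑ c, phat (c, v)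

/-- Induced chain on `V` of a lifted chain `P` with stationary distribution `phat`. -/
noncomputable def inducedChain (P : C × V → C × V → ℝ) (phat : C × V → ℝ) : V → V → ℝ :=
  fun v' v => ∑ c, ∑ c', (phat (c, v) / margDist phat v) * P (c', v') (c, v)

end Lift

open scoped Classical in
/-- Population `P_X(ρ)`: real part of the sum of diagonal entries of `ρ` over lifted
nodes whose vertex component lies in `X`. -/
noncomputable def popul {C V : Type*} [Fintype C] [Fintype V]
    (ρ : Matrix (C × V) (C × V) ℂ) (X : Set V) : ℝ :=
  (∑ x : C × V, if x.2 ∈ X then ρ x x else 0).re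


section QClocalAux
open Matrix
open scoped ComplexOrder

variable {n : Type*} [Fintype n] [DecidableEq n]

private lemma psd_trace_nonneg' {A : Matrix n n ℂ} (hA : A.PosSemidef) : 0 ≤ A.trace := by
  unfold Matrix.trace
  refine Finset.sum_nonneg fun i _ => ?_
  exact hA.diag_nonneg

private lemma trace_mul_psd_nonneg' {A B : Matrix n n ℂ} (hA : A.PosSemidef)
    (hB : B.PosSemidef) : 0 ≤ (A * B).trace := by
  obtain ⟨S, hS⟩ : ∃ S : Matrix n n ℂ, B = star S * S := by
    open scoped MatrixOrder in
    exact CStarAlgebra.nonneg_iff_eq_star_mul_self.mp hB.nonneg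
  have h1 : (A * B).trace = (Sᴴᴴ * A * Sᴴ).trace := by
    rw [conjTranspose_conjTranspose, hS, star_eq_conjTranspose]
    calc (A * (Sᴴ * S)).trace = ((A * Sᴴ) * S).trace := by rw [mul_assoc]
      _ = (S * (A * Sᴴ)).trace := (Matrix.trace_mul_comm _ _)
      _ = (S * A * Sᴴ).trace := by rw [mul_assoc]
  rw [h1]
  exact psd_trace_nonneg' (hA.conjTranspose_mul_mul_same _)

private lemma psd_sum' {K : Type*} [Fintype K] (f : K → Matrix n n ℂ)
    (h : ∀ k, (f k).PosSemidef) : (∑ k, f k).PosSemidef := by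
  classical
  exact Finset.sum_induction f _ (fun a b ha hb => ha.add hb) Matrix.PosSemidef.zero
    (fun k _ => h k)

end QClocalAux

/-- Locality of quantum channels: the Kraus operators of a quantum
channel vanish on non-edges iff the channel cannot move more population onto a vertex
set `X` than was present on `X` and its neighborhood. -/
theorem quantum_channel_locality_equivalence
    {C V K : Type} [Fintype C] [Fintype V] [Fintype K] [DecidableEq C] [DecidableEq V]
    (E : V → V → Prop) (hloop : ∀ v, E v v)
    (M : K → Matrix (C × V) (C × V) ℂ)
    (hKraus : ∑ k, (M k)ᴴ * M k = 1) :
    (∀ (c c' : C) (v v' : V), ¬ E v v' → ∀ k, M k (c', v') (c, v) = 0) ↔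
    (∀ (X : Set V) (ρ : Matrix (C × V) (C × V) ℂ), ρ.PosSemidef → ρ.trace = 1 →
      popul (∑ k, M k * ρ * (M k)ᴴ) X ≤ popul ρ X + popul ρ (nbhd E X)) := by
  classical
  -- population as a trace against a diagonal projection
  have keyP : ∀ (σ : Matrix (C × V) (C × V) ℂ) (Z : Set V),
      popul σ Z = ((Matrix.diagonal (fun x : C × V => if x.2 ∈ Z then (1:ℂ) else 0)
        * σ).trace).re := by
    intro σ Z
    have : (Matrix.diagonal (fun x : C × V => if x.2 ∈ Z then (1:ℂ) else 0) * σ).trace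
        = ∑ x : C × V, if x.2 ∈ Z then σ x x else 0 := by
      unfold Matrix.trace
      refine Finset.sum_congr rfl fun x _ => ?_
      simp [Matrix.diag, Matrix.diagonal_mul, ite_mul]
    rw [popul, this]
  constructor
  · -- locality of Kraus operators implies the population bound
    intro hloc X ρ hρ htr
    set Y : Set V := X ∪ nbhd E X with hYdef
    have hYmem : ∀ v : V, v ∈ Y ↔ ∃ v' ∈ X, E v v' := by
      intro v
      constructor
      · rintro (hv | ⟨-, hv⟩)
        · exact ⟨v, hv, hloop v⟩
        · exact hv
      · rintro ⟨v', hv', hE⟩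
        by_cases h : v ∈ X
        · exact Or.inl h
        · exact Or.inr ⟨h, v', hv', hE⟩
    set dX : C × V → ℂ := fun x => if x.2 ∈ X then 1 else 0 with hdX
    set dY : C × V → ℂ := fun x => if x.2 ∈ Y then 1 else 0 with hdY
    set PX := Matrix.diagonal dX with hPX
    set PY := Matrix.diagonal dY with hPY
    set A : Matrix (C × V) (C × V) ℂ := ∑ k, (M k)ᴴ * PX * M k with hA
    -- entries of A vanish off Y
    have hAvanish : ∀ x y : C × V, (x.2 ∉ Y ∨ y.2 ∉ Y) → A x y = 0 := by
      intro x y hxy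
      rw [hA, Matrix.sum_apply]
      refine Finset.sum_eq_zero fun k _ => ?_
      rw [Matrix.mul_apply]
      refine Finset.sum_eq_zero fun z _ => ?_
      rw [hPX, Matrix.mul_diagonal, Matrix.conjTranspose_apply]
      by_cases hz : z.2 ∈ X
      · rcases hxy with hx | hy
        · have hnE : ¬ E x.2 z.2 := fun hE => hx ((hYmem x.2).2 ⟨z.2, hz, hE⟩)
          have h0 : M k z x = 0 := hloc x.1 z.1 x.2 z.2 hnE k
          simp [h0]
        · have hnE : ¬ E y.2 z.2 := fun hE => hy ((hYmem y.2).2 ⟨z.2, hz, hE⟩)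
          have h0 : M k z y = 0 := hloc y.1 z.1 y.2 z.2 hnE k
          simp [h0]
      · simp [hdX, hz]
    have hPYA : PY * A * PY = A := by
      ext x y
      have he : (PY * A * PY) x y = dY x * A x y * dY y := by
        rw [hPY, Matrix.mul_diagonal, Matrix.diagonal_mul]
      rw [he]
      by_cases hx : x.2 ∈ Y
      · by_cases hy : y.2 ∈ Y
        · simp [hdY, hx, hy]
        · simp [hAvanish x y (Or.inr hy)]
      · simp [hAvanish x y (Or.inl hx)]
    have hPYsq : PY * PY = PY := by
      rw [hPY, Matrix.diagonal_mul_diagonal]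
      refine congrArg Matrix.diagonal (funext fun x => ?_)
      by_cases hx : x.2 ∈ Y <;> simp [hdY, hx]
    have hPYherm : PYᴴ = PY := by
      rw [hPY, Matrix.diagonal_conjTranspose]
      refine congrArg Matrix.diagonal (funext fun x => ?_)
      by_cases hx : x.2 ∈ Y <;> simp [hdY, hx]
    -- 1 - A is positive semidefinite
    have hOneSubA : (1 - A).PosSemidef := by
      have hsum : (1 : Matrix (C × V) (C × V) ℂ) - A
          = ∑ k, (M k)ᴴ * (1 - PX) * M k := by
        rw [hA]
        have : ∀ k : K, (M k)ᴴ * ((1 : Matrix (C × V) (C × V) ℂ) - PX) * M k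
            = (M k)ᴴ * M k - (M k)ᴴ * PX * M k := by
          intro k; noncomm_ring
        rw [Finset.sum_congr rfl fun k _ => this k, Finset.sum_sub_distrib, hKraus]
      rw [hsum]
      refine psd_sum' _ fun k => ?_
      refine Matrix.PosSemidef.conjTranspose_mul_mul_same ?_ (M k)
      have : (1 : Matrix (C × V) (C × V) ℂ) - PX
          = Matrix.diagonal (fun x => 1 - dX x) := by
        rw [hPX, ← Matrix.diagonal_one, Matrix.diagonal_sub]
      rw [this]
      refine Matrix.posSemidef_diagonal_iff.2 fun x => ?_
      by_cases hx : x.2 ∈ X <;> simp [hdX, hx]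
    have hPYsubA : (PY - A).PosSemidef := by
      have : PY - A = PYᴴ * (1 - A) * PY := by
        rw [hPYherm, mul_sub, sub_mul, mul_one, hPYsq]
        rw [mul_assoc, ← mul_assoc PY A PY, hPYA]
      rw [this]
      exact hOneSubA.conjTranspose_mul_mul_same PY
    -- trace computations
    have htr1 : (PX * (∑ k, M k * ρ * (M k)ᴴ)).trace = (A * ρ).trace := by
      rw [Finset.mul_sum, Matrix.trace_sum, hA, Finset.sum_mul, Matrix.trace_sum]
      refine Finset.sum_congr rfl fun k _ => ?_
      calc (PX * (M k * ρ * (M k)ᴴ)).trace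
          = (PX * (M k * ρ) * (M k)ᴴ).trace := by rw [← mul_assoc]
        _ = ((M k)ᴴ * PX * (M k * ρ)).trace := Matrix.trace_mul_cycle _ _ _
        _ = ((M k)ᴴ * PX * M k * ρ).trace := by rw [mul_assoc ((M k)ᴴ * PX), ← mul_assoc]
    have hkey : 0 ≤ ((PY - A) * ρ).trace := trace_mul_psd_nonneg' hPYsubA hρ
    have hineq : ((A * ρ).trace).re ≤ ((PY * ρ).trace).re := by
      have h2 : ((PY - A) * ρ).trace = (PY * ρ).trace - (A * ρ).trace := by
        rw [Matrix.sub_mul, Matrix.trace_sub]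
      rw [h2] at hkey
      have := (Complex.le_def.1 hkey).1
      simpa using this
    -- split the Y-population
    have hsplit : popul ρ X + popul ρ (nbhd E X) = popul ρ Y := by
      rw [popul, popul, popul, ← Complex.add_re, ← Finset.sum_add_distrib]
      congr 1
      refine Finset.sum_congr rfl fun x _ => ?_
      by_cases h1 : x.2 ∈ X
      · have h2 : x.2 ∉ nbhd E X := fun h => h.1 h1
        have h3 : x.2 ∈ Y := Or.inl h1
        simp [h1, h2, h3]
      · by_cases h2 : x.2 ∈ nbhd E X
        · have h3 : x.2 ∈ Y := Or.inr h2
          simp [h1, h2, h3]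
        · have h3 : x.2 ∉ Y := fun h => h.elim h1 h2
          simp [h1, h2, h3]
    calc popul (∑ k, M k * ρ * (M k)ᴴ) X
        = ((PX * (∑ k, M k * ρ * (M k)ᴴ)).trace).re := by rw [keyP, hPX, hdX]; try rfl
      _ = ((A * ρ).trace).re := by rw [htr1]
      _ ≤ ((PY * ρ).trace).re := hineq
      _ = popul ρ Y := by rw [keyP, hPY, hdY]; congr!
      _ = popul ρ X + popul ρ (nbhd E X) := hsplit.symm
  · -- converse: the population bound forces locality
    intro hpop c c' v v' hnE k
    have hvv' : v ≠ v' := fun h => hnE (h ▸ hloop v)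
    set ρ : Matrix (C × V) (C × V) ℂ := Matrix.diagonal (Pi.single (c, v) 1) with hρdef
    have hρpsd : ρ.PosSemidef := by
      refine Matrix.posSemidef_diagonal_iff.2 fun x => ?_
      rcases eq_or_ne x (c, v) with rfl | hne
      · simp
      · simp [Pi.single_apply, hne]
    have hρtr : ρ.trace = 1 := by
      rw [hρdef, Matrix.trace_diagonal]
      simp
    have hbound := hpop {v'} ρ hρpsd hρtr
    -- the right-hand side is zero
    have hX : popul ρ ({v'} : Set V) = 0 := by
      rw [popul]
      rw [Finset.sum_eq_zero]
      · simp
      intro x _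
      rcases eq_or_ne x (c, v) with rfl | hne
      · simp [hvv'.symm]  -- x.2 = v ∉ {v'}
        intro h
        exact absurd h hvv'
      · simp [hρdef, Matrix.diagonal_apply_eq, Pi.single_apply, hne]
    have hN : popul ρ (nbhd E ({v'} : Set V)) = 0 := by
      rw [popul]
      rw [Finset.sum_eq_zero]
      · simp
      intro x _
      rcases eq_or_ne x (c, v) with rfl | hne
      · have : v ∉ nbhd E ({v'} : Set V) := by
          rintro ⟨-, w, hw, hE⟩
          rw [Set.mem_singleton_iff] at hw
          exact hnE (hw ▸ hE)
        simp [this]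
      · simp [hρdef, Matrix.diagonal_apply_eq, Pi.single_apply, hne]
    rw [hX, hN, add_zero] at hbound
    -- the left-hand side is a sum of squared moduli
    have hdiag : ∀ (j : K) (x : C × V),
        (M j * ρ * (M j)ᴴ) x x = ((Complex.normSq (M j x (c, v)) : ℝ) : ℂ) := by
      intro j x
      rw [hρdef, Matrix.mul_apply]
      have hz : ∀ z : C × V, (M j * Matrix.diagonal (Pi.single (c, v) 1 : C × V → ℂ)) x z
          * (M j)ᴴ z x = if z = (c, v) then M j x (c, v) * star (M j x (c, v)) else 0 := by
        intro z
        rcases eq_or_ne z (c, v) with rfl | hne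
        · simp [Matrix.mul_diagonal, Matrix.conjTranspose_apply]
        · simp [Matrix.mul_diagonal, Matrix.conjTranspose_apply, Pi.single_apply, hne]
      rw [Finset.sum_congr rfl fun z _ => hz z,
        Finset.sum_ite_eq' Finset.univ ((c, v) : C × V)]
      simp [Complex.star_def, Complex.mul_conj]
    have hsum : popul (∑ j, M j * ρ * (M j)ᴴ) ({v'} : Set V)
        = ∑ x : C × V, if x.2 ∈ ({v'} : Set V)
            then (∑ j : K, Complex.normSq (M j x (c, v))) else 0 := by
      have hpt : ∀ x : C × V,
          (if x.2 ∈ ({v'} : Set V) then (∑ j, M j * ρ * (M j)ᴴ) x x else 0)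
          = (((if x.2 ∈ ({v'} : Set V)
              then (∑ j : K, Complex.normSq (M j x (c, v))) else 0 : ℝ)) : ℂ) := by
        intro x
        split
        · rw [Matrix.sum_apply]
          push_cast
          exact Finset.sum_congr rfl fun j _ => hdiag j x
        · simp
      have hgoal : popul (∑ j, M j * ρ * (M j)ᴴ) ({v'} : Set V)
          = (∑ x : C × V, if x.2 ∈ ({v'} : Set V)
              then (∑ j, M j * ρ * (M j)ᴴ) x x else 0).re := by
        rw [popul]; congr!
      have hc : (∑ x : C × V, if x.2 ∈ ({v'} : Set V)
            then (∑ j, M j * ρ * (M j)ᴴ) x x else 0)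
          = ((∑ x : C × V, if x.2 ∈ ({v'} : Set V)
            then (∑ j : K, Complex.normSq (M j x (c, v))) else 0 : ℝ) : ℂ) := by
        push_cast
        exact Finset.sum_congr rfl fun x _ => hpt x
      rw [hgoal, hc, Complex.ofReal_re]
    rw [hsum] at hbound
    have hnonneg : ∀ x : C × V, x ∈ Finset.univ →
        0 ≤ (if x.2 ∈ ({v'} : Set V)
            then (∑ j : K, Complex.normSq (M j x (c, v))) else 0) := by
      intro x _
      split
      · exact Finset.sum_nonneg fun j _ => Complex.normSq_nonneg _
      · exact le_rfl
    have hzero : ∀ x : C × V, x ∈ Finset.univ →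
        (if x.2 ∈ ({v'} : Set V)
            then (∑ j : K, Complex.normSq (M j x (c, v))) else 0) = 0 := by
      rw [← Finset.sum_eq_zero_iff_of_nonneg hnonneg]
      exact le_antisymm hbound (Finset.sum_nonneg hnonneg)
    have h1 := hzero (c', v') (Finset.mem_univ _)
    rw [if_pos (by simp : ((c', v') : C × V).2 ∈ ({v'} : Set V))] at h1
    have h2 : Complex.normSq (M k (c', v') (c, v)) = 0 := by
      have := (Finset.sum_eq_zero_iff_of_nonneg
        (fun j _ => Complex.normSq_nonneg (M j (c', v') (c, v)))).1 h1 k (Finset.mem_univ k)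
      exact this
    exact Complex.normSq_eq_zero.1 h2
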